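/- Let α be the field automorphism of ℚ(A₁,A₂,A₃) determined by α(A_i) = A_i·η² where η = (A₁²+A₂²+A₃²)/(A₁A₂A₃), and let μ_k be the Markov mutation in direction k (substituting A_k ↦ (A_{k+1}²+A_{k+2}²)/A_k). Then α ∘ μ_k = μ_k ∘ α as maps on rational functions, i.e., for every f ∈ ℚ(A₁,A₂,A₃), applying mutation then α yields the same result as applying α then mutation. -/

import Mathlib

open MvPolynomial

/-- The field of rational functions ℚ(A₁,A₂,A₃). -/
noncomputable abbrev Kf : Type := FractionRing (MvPolynomial (Fin 3) ℚ)

/-- The generator Aᵢ of ℚ(A₁,A₂,A₃) (indexed by `Fin 3`). -/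
noncomputable def Av (i : Fin 3) : Kf := algebraMap (MvPolynomial (Fin 3) ℚ) Kf (X i)

/-- η = (A₁²+A₂²+A₃²)/(A₁A₂A₃). -/
noncomputable def ηv : Kf := (Av 0 ^ 2 + Av 1 ^ 2 + Av 2 ^ 2) / (Av 0 * Av 1 * Av 2)

lemma alg_ne {p : MvPolynomial (Fin 3) ℚ} (h : p ≠ 0) :
    algebraMap (MvPolynomial (Fin 3) ℚ) Kf p ≠ 0 :=
  (map_ne_zero_iff _ (IsFractionRing.injective _ _)).mpr h

lemma Av_ne (i : Fin 3) : Av i ≠ 0 := alg_ne (X_ne_zero i)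

lemma sum_sq_ne (i j : Fin 3) : Av i ^ 2 + Av j ^ 2 ≠ 0 := by
  have : Av i ^ 2 + Av j ^ 2 = algebraMap (MvPolynomial (Fin 3) ℚ) Kf (X i ^ 2 + X j ^ 2) := by
    simp [Av]
  rw [this]
  apply alg_ne
  intro h
  have := congrArg (eval (fun _ => (1:ℚ))) h
  simp at this

lemma ηv_ne : ηv ≠ 0 := by
  have h1 : Av 0 ^ 2 + Av 1 ^ 2 + Av 2 ^ 2 ≠ 0 := by
    have : Av 0 ^ 2 + Av 1 ^ 2 + Av 2 ^ 2
        = algebraMap (MvPolynomial (Fin 3) ℚ) Kf (X 0 ^ 2 + X 1 ^ 2 + X 2 ^ 2) := by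
      simp [Av]
    rw [this]
    apply alg_ne
    intro h
    have := congrArg (eval (fun _ => (1:ℚ))) h
    norm_num at this
  exact div_ne_zero h1 (by simp [Av_ne, mul_ne_zero])

/-- the automorphism α with α(Aᵢ) = Aᵢη² commutes with the Markov
mutation μ_k (substituting A_k ↦ (A_{k+1}²+A_{k+2}²)/A_k). -/
theorem alpha_commutes_with_markov_mutation (k : Fin 3) (α μ : Kf →+* Kf)
    (hα : ∀ i : Fin 3, α (Av i) = Av i * ηv ^ 2)
    (hμk : μ (Av k) = (Av (k + 1) ^ 2 + Av (k + 2) ^ 2) / Av k)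
    (hμ : ∀ i : Fin 3, i ≠ k → μ (Av i) = Av i) :
    ∀ f : Kf, α (μ f) = μ (α f) := by
  have hη : μ ηv = ηv := by
    rw [ηv, map_div₀, map_add, map_add, map_pow, map_pow, map_pow, map_mul, map_mul]
    fin_cases k
    · have h0 : μ (Av 0) = (Av 1 ^ 2 + Av 2 ^ 2) / Av 0 := hμk
      rw [h0, hμ 1 (by decide), hμ 2 (by decide)]
      field_simp [Av_ne, sum_sq_ne]
      ring
    · have h0 : μ (Av 1) = (Av 2 ^ 2 + Av 0 ^ 2) / Av 1 := hμk
      rw [h0, hμ 0 (by decide), hμ 2 (by decide)]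
      field_simp [Av_ne, sum_sq_ne]
      ring
    · have h0 : μ (Av 2) = (Av 0 ^ 2 + Av 1 ^ 2) / Av 2 := hμk
      rw [h0, hμ 0 (by decide), hμ 1 (by decide)]
      field_simp [Av_ne, sum_sq_ne]
      ring
  have key : ∀ i : Fin 3, α (μ (Av i)) = μ (α (Av i)) := by
    intro i
    rw [hα i, map_mul, map_pow, hη]
    by_cases hik : i = k
    · subst hik
      rw [hμk, map_div₀, map_add, map_pow, map_pow, hα, hα, hα]
      field_simp [Av_ne, ηv_ne]
    · rw [hμ i hik, hα i]
  suffices h : α.comp μ = μ.comp α by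
    intro f; exact RingHom.congr_fun h f
  apply IsLocalization.ringHom_ext (nonZeroDivisors (MvPolynomial (Fin 3) ℚ))
  apply MvPolynomial.ringHom_ext
  · intro q
    have h1 : (algebraMap (MvPolynomial (Fin 3) ℚ) Kf) (C q) = (q : Kf) :=
      eq_ratCast ((algebraMap (MvPolynomial (Fin 3) ℚ) Kf).comp
        (C : ℚ →+* MvPolynomial (Fin 3) ℚ)) q
    simp only [RingHom.comp_apply, h1, map_ratCast]
  · intro i
    simpa [RingHom.comp_apply, Av] using key i
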